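/- Define φ(x, t) = sin(2·arctan(e^{−t}·tan(x/2))) for x ∈ (−π, π) and t ∈ ℝ. Then φ(x, 0) = sin x for all x ∈ (−π, π), and φ satisfies the advection equation ∂_t φ(x, t) + sin(x)·∂_x φ(x, t) = 0 for all x ∈ (−π, π) and t ∈ ℝ. -/

import Mathlib

open Real

/-- The function `φ(x, t) = sin(2·arctan(e^{−t}·tan(x/2)))` satisfies
`φ(x, 0) = sin x` and solves the advection equation
`∂ₜφ + sin(x)·∂ₓφ = 0` on `(−π, π) × ℝ`. -/
theorem exact_solution_1d_sine_velocity :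
    (∀ x : ℝ, -π < x → x < π →
      Real.sin (2 * Real.arctan (Real.exp (-(0 : ℝ)) * Real.tan (x / 2))) =
        Real.sin x) ∧
    (∀ x t : ℝ, -π < x → x < π →
      deriv (fun s : ℝ =>
          Real.sin (2 * Real.arctan (Real.exp (-s) * Real.tan (x / 2)))) t +
        Real.sin x *
          deriv (fun u : ℝ =>
            Real.sin (2 * Real.arctan (Real.exp (-t) * Real.tan (u / 2)))) x
        = 0) := by
  constructor
  · intro x hx1 hx2
    have h1 : -(π/2) < x/2 := by linarith
    have h2 : x/2 < π/2 := by linarith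
    rw [neg_zero, Real.exp_zero, one_mul, Real.arctan_tan h1 h2]
    ring_nf
  · intro x t hx1 hx2
    have h1 : -(π/2) < x/2 := by linarith
    have h2 : x/2 < π/2 := by linarith
    have hcos : Real.cos (x/2) ≠ 0 :=
      ne_of_gt (Real.cos_pos_of_mem_Ioo ⟨h1, h2⟩)
    set c := Real.exp (-t) with hc
    set a := Real.tan (x/2) with ha
    -- t-derivative
    have hAt : HasDerivAt (fun s : ℝ =>
        Real.sin (2 * Real.arctan (Real.exp (-s) * a)))
        (Real.cos (2 * Real.arctan (c * a)) *
          (2 * ((1 / (1 + (c * a) ^ 2)) * (c * -1 * a)))) t := by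
      have e1 : HasDerivAt (fun s : ℝ => -s) (-1) t := hasDerivAt_neg t
      have e2 : HasDerivAt (fun s : ℝ => Real.exp (-s)) (c * -1) t := e1.exp
      have e3 := e2.mul_const a
      have e4 := (Real.hasDerivAt_arctan (c * a)).comp t e3
      have e5 := e4.const_mul (2 : ℝ)
      have e6 := (Real.hasDerivAt_sin (2 * Real.arctan (c * a))).comp t e5
      exact e6
    -- x-derivative
    have hAx : HasDerivAt (fun u : ℝ =>
        Real.sin (2 * Real.arctan (c * Real.tan (u / 2))))
        (Real.cos (2 * Real.arctan (c * a)) *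
          (2 * ((1 / (1 + (c * a) ^ 2)) * (c * (1 / Real.cos (x/2) ^ 2 * (1/2)))))) x := by
      have g1 : HasDerivAt (fun u : ℝ => u / 2) (1/2) x := by
        simpa using (hasDerivAt_id x).div_const 2
      have g2 := (Real.hasDerivAt_tan hcos).comp x g1
      have g3 := g2.const_mul c
      have g4 := (Real.hasDerivAt_arctan (c * a)).comp x g3
      have g5 := g4.const_mul (2 : ℝ)
      have g6 := (Real.hasDerivAt_sin (2 * Real.arctan (c * a))).comp x g5
      exact g6
    rw [hAt.deriv, hAx.deriv]
    have hsin : Real.sin x = 2 * a * Real.cos (x/2) ^ 2 := by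
      have h' : Real.sin x = 2 * Real.sin (x/2) * Real.cos (x/2) := by
        rw [← Real.sin_two_mul]; ring_nf
      rw [h', ha, Real.tan_eq_sin_div_cos]
      field_simp
    have hne : (1 + (c * a) ^ 2) ≠ 0 := by positivity
    rw [hsin]
    field_simp
    ring
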